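/- Let F be a field and n ≥ m natural numbers. The tensor product over F[X] of the two-term complexes (F[X] --X^n--> F[X]) and (F[X] --X^m--> F[X]) is isomorphic, as a complex of F[X]-modules, to the direct sum of two copies of the complex (F[X] --X^m--> F[X]) (in appropriate homological degrees). -/

import Mathlib

open Polynomial TensorProduct

/-- Shear automorphism `(a,b) ↦ (a, b + c*a)` of `R × R`. -/
def shearEquiv (R : Type*) [CommRing R] (c : R) : (R × R) ≃ₗ[R] (R × R) :=
  LinearEquiv.ofLinear
    (LinearMap.prod (LinearMap.fst R R R) (LinearMap.snd R R R + c • LinearMap.fst R R R))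
    (LinearMap.prod (LinearMap.fst R R R) (LinearMap.snd R R R - c • LinearMap.fst R R R))
    (by ext x <;> simp) (by ext x <;> simp)

@[simp] lemma shearEquiv_apply (R : Type*) [CommRing R] (c a b : R) :
    shearEquiv R c (a, b) = (a, b + c * a) := by
  simp [shearEquiv, smul_eq_mul, mul_comm]

/-- For `m ≤ n`, the total complex of the tensor product over `F[X]` of the two-term
complexes `F[X] --Xⁿ--> F[X]` and `F[X] --Xᵐ--> F[X]` (which is the three-term complex
`F[X]⊗F[X] → (F[X]⊗F[X]) × (F[X]⊗F[X]) → F[X]⊗F[X]` with Koszul-signed differentials)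
is isomorphic, as a complex of `F[X]`-modules, to the direct sum of two copies of the
two-term complex `F[X] --Xᵐ--> F[X]`, placed in degrees (2,1) and (1,0) respectively. -/
theorem stmt1 (F : Type) [Field F] (n m : ℕ) (h : m ≤ n) :
    -- multiplication by Xⁿ resp. Xᵐ on F[X]
    ∀ (f g : Polynomial F →ₗ[Polynomial F] Polynomial F),
      f = (X : Polynomial F) ^ n • LinearMap.id →
      g = (X : Polynomial F) ^ m • LinearMap.id →
      -- differentials of the total complex of the tensor product
      ∀ (d₂ : (Polynomial F ⊗[Polynomial F] Polynomial F) →ₗ[Polynomial F]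
              ((Polynomial F ⊗[Polynomial F] Polynomial F) ×
               (Polynomial F ⊗[Polynomial F] Polynomial F)))
        (d₁ : ((Polynomial F ⊗[Polynomial F] Polynomial F) ×
               (Polynomial F ⊗[Polynomial F] Polynomial F)) →ₗ[Polynomial F]
              (Polynomial F ⊗[Polynomial F] Polynomial F)),
        d₂ = LinearMap.prod (-(TensorProduct.map (LinearMap.id : Polynomial F →ₗ[Polynomial F] Polynomial F) g)) (TensorProduct.map f (LinearMap.id : Polynomial F →ₗ[Polynomial F] Polynomial F)) →
        d₁ = (TensorProduct.map f (LinearMap.id : Polynomial F →ₗ[Polynomial F] Polynomial F)) ∘ₗ LinearMap.fst _ _ _ +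
             (TensorProduct.map (LinearMap.id : Polynomial F →ₗ[Polynomial F] Polynomial F) g) ∘ₗ LinearMap.snd _ _ _ →
      -- there is an isomorphism of complexes onto the direct sum of two copies of
      -- `F[X] --Xᵐ--> F[X]`, in degrees (2,1) and (1,0)
      ∃ (e₂ : (Polynomial F ⊗[Polynomial F] Polynomial F) ≃ₗ[Polynomial F] Polynomial F)
        (e₁ : ((Polynomial F ⊗[Polynomial F] Polynomial F) ×
               (Polynomial F ⊗[Polynomial F] Polynomial F)) ≃ₗ[Polynomial F]
              (Polynomial F × Polynomial F))
        (e₀ : (Polynomial F ⊗[Polynomial F] Polynomial F) ≃ₗ[Polynomial F] Polynomial F),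
        (e₁.toLinearMap ∘ₗ d₂ =
          (LinearMap.prod ((X : Polynomial F) ^ m • LinearMap.id) 0) ∘ₗ e₂.toLinearMap) ∧
        (e₀.toLinearMap ∘ₗ d₁ =
          (((X : Polynomial F) ^ m • LinearMap.id) ∘ₗ LinearMap.snd _ _ _) ∘ₗ e₁.toLinearMap) := by
  intro f g hf hg d₂ d₁ hd₂ hd₁
  subst hf hg hd₂ hd₁
  set R := Polynomial F
  refine ⟨(TensorProduct.lid R R) ≪≫ₗ (LinearEquiv.neg R),
    ((TensorProduct.lid R R).prodCongr (TensorProduct.lid R R)) ≪≫ₗ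
      shearEquiv R ((X : R) ^ (n - m)),
    TensorProduct.lid R R, ?_, ?_⟩
  · apply TensorProduct.ext'
    intro a b
    simp [R, smul_smul, mul_comm, mul_left_comm, mul_assoc,
      ← pow_add, Nat.add_sub_cancel' h]
  · apply LinearMap.prod_ext <;> apply TensorProduct.ext' <;> intro a b <;>
      simp [R, smul_smul, mul_comm, mul_left_comm, mul_assoc,
        ← pow_add, Nat.add_sub_cancel' h]
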